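/- Let U, Ũ ∈ ℝ^{d×k} have orthonormal columns and let O* minimize ‖U − ŨO‖_F over orthogonal O. Define d(U,Ũ) = ‖U − ŨO*‖₂. Then d(U,Ũ) = sqrt(2 − 2·sqrt(1 − dist(U,Ũ)²)), where dist(U,Ũ) = ‖UUᵀ − ŨŨᵀ‖₂. -/

import Mathlib

open Matrix Finset

/-- Spectral (operator) norm of a real matrix. -/
noncomputable def specNorm {a b : ℕ} (A : Matrix (Fin a) (Fin b) ℝ) : ℝ :=
  ‖LinearMap.toContinuousLinearMap (Matrix.toEuclideanLin A)‖

/-- Frobenius norm of a real matrix. -/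
noncomputable def frobNorm {a b : ℕ} (A : Matrix (Fin a) (Fin b) ℝ) : ℝ :=
  Real.sqrt (∑ i, ∑ j, (A i j) ^ 2)


namespace Procrustes

noncomputable def T {a b : ℕ} (A : Matrix (Fin a) (Fin b) ℝ) :
    EuclideanSpace ℝ (Fin b) →L[ℝ] EuclideanSpace ℝ (Fin a) :=
  LinearMap.toContinuousLinearMap (Matrix.toEuclideanLin A)

lemma specNorm_eq {a b : ℕ} (A : Matrix (Fin a) (Fin b) ℝ) : specNorm A = ‖T A‖ := rfl

noncomputable def e {n : ℕ} (v : Fin n → ℝ) : EuclideanSpace ℝ (Fin n) :=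
  (WithLp.equiv 2 _).symm v

lemma T_apply {a b : ℕ} (A : Matrix (Fin a) (Fin b) ℝ) (v : Fin b → ℝ) :
    T A (e v) = e (A *ᵥ v) := rfl

lemma norm_e_sq {n : ℕ} (v : Fin n → ℝ) : ‖e v‖ ^ 2 = v ⬝ᵥ v := by
  rw [EuclideanSpace.norm_eq]
  rw [Real.sq_sqrt (by positivity)]
  simp [e, dotProduct, Real.norm_eq_abs, sq_abs, pow_two]

lemma specNorm_nonneg {a b : ℕ} (A : Matrix (Fin a) (Fin b) ℝ) : 0 ≤ specNorm A :=
  norm_nonneg _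

lemma dot_le_spec {a b : ℕ} (A : Matrix (Fin a) (Fin b) ℝ) (v : Fin b → ℝ) :
    (A *ᵥ v) ⬝ᵥ (A *ᵥ v) ≤ specNorm A ^ 2 * (v ⬝ᵥ v) := by
  have h := (T A).le_opNorm (e v)
  have h2 : ‖T A (e v)‖ ^ 2 ≤ (‖T A‖ * ‖e v‖) ^ 2 :=
    pow_le_pow_left₀ (norm_nonneg _) h 2
  rw [T_apply, norm_e_sq, mul_pow, norm_e_sq] at h2
  exact h2

lemma spec_le {a b : ℕ} (A : Matrix (Fin a) (Fin b) ℝ) {c : ℝ} (hc : 0 ≤ c)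
    (h : ∀ v : Fin b → ℝ, (A *ᵥ v) ⬝ᵥ (A *ᵥ v) ≤ c ^ 2 * (v ⬝ᵥ v)) :
    specNorm A ≤ c := by
  rw [specNorm_eq]
  refine ContinuousLinearMap.opNorm_le_bound _ hc fun x => ?_
  have hx : x = e ((WithLp.equiv 2 _) x) := rfl
  have h2 : ‖T A x‖ ^ 2 ≤ (c * ‖x‖) ^ 2 := by
    rw [hx, T_apply, norm_e_sq, mul_pow, norm_e_sq]
    exact h _
  have := Real.sqrt_le_sqrt h2
  rwa [Real.sqrt_sq (norm_nonneg _), Real.sqrt_sq (by positivity)] at this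

lemma spec_attained {a b : ℕ} (hb : 0 < b) (A : Matrix (Fin a) (Fin b) ℝ) :
    ∃ v : Fin b → ℝ, v ⬝ᵥ v = 1 ∧ (A *ᵥ v) ⬝ᵥ (A *ᵥ v) = specNorm A ^ 2 := by
  have hne : (Metric.sphere (0 : EuclideanSpace ℝ (Fin b)) 1).Nonempty := by
    refine ⟨EuclideanSpace.single ⟨0, hb⟩ 1, ?_⟩
    simp [EuclideanSpace.norm_single]
  have hcomp : IsCompact (Metric.sphere (0 : EuclideanSpace ℝ (Fin b)) 1) :=
    isCompact_sphere _ _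
  have hcont : Continuous fun x : EuclideanSpace ℝ (Fin b) => ‖T A x‖ :=
    (T A).continuous.norm
  obtain ⟨x₀, hx₀mem, hx₀max⟩ := hcomp.exists_isMaxOn hne hcont.continuousOn
  have hx₀norm : ‖x₀‖ = 1 := by simpa using hx₀mem
  have hle : ‖T A‖ ≤ ‖T A x₀‖ := by
    refine ContinuousLinearMap.opNorm_le_bound _ (norm_nonneg _) fun x => ?_
    rcases eq_or_ne x 0 with rfl | hx
    · simp
    · have hxn : ‖x‖ ≠ 0 := norm_ne_zero_iff.mpr hx
      have hmem : (‖x‖⁻¹ • x) ∈ Metric.sphere (0 : EuclideanSpace ℝ (Fin b)) 1 := by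
        simp [norm_smul, abs_of_nonneg (inv_nonneg.mpr (norm_nonneg x)),
          inv_mul_cancel₀ hxn]
      have hmax : ‖T A (‖x‖⁻¹ • x)‖ ≤ ‖T A x₀‖ := hx₀max hmem
      rw [_root_.map_smul, norm_smul, Real.norm_eq_abs,
        abs_of_nonneg (inv_nonneg.mpr (norm_nonneg x))] at hmax
      have h2 : ‖x‖ * (‖x‖⁻¹ * ‖T A x‖) ≤ ‖x‖ * ‖T A x₀‖ :=
        mul_le_mul_of_nonneg_left hmax (norm_nonneg x)
      rwa [← mul_assoc, mul_inv_cancel₀ hxn, one_mul, mul_comm] at h2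
  have hge : ‖T A x₀‖ ≤ ‖T A‖ := by
    have := (T A).le_opNorm x₀
    rwa [hx₀norm, mul_one] at this
  have heq : ‖T A x₀‖ = ‖T A‖ := le_antisymm hge hle
  refine ⟨(WithLp.equiv 2 _) x₀, ?_, ?_⟩
  · have := norm_e_sq ((WithLp.equiv 2 _) x₀)
    have hex : e ((WithLp.equiv 2 _) x₀) = x₀ := rfl
    rw [hex, hx₀norm] at this
    simpa using this.symm
  · have hex : e ((WithLp.equiv 2 _) x₀) = x₀ := rfl
    have h1 : ‖T A x₀‖ ^ 2 = (A *ᵥ (WithLp.equiv 2 _) x₀) ⬝ᵥ (A *ᵥ (WithLp.equiv 2 _) x₀) := by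
      rw [show T A x₀ = e (A *ᵥ (WithLp.equiv 2 _) x₀) from rfl, norm_e_sq]
    rw [← h1, heq, specNorm_eq]

lemma trace_vecMulVec_mul {n : ℕ} (a b : Fin n → ℝ) (M : Matrix (Fin n) (Fin n) ℝ) :
    trace (vecMulVec a b * M) = b ⬝ᵥ (M *ᵥ a) := by
  simp only [Matrix.trace, Matrix.diag_apply, mul_apply, vecMulVec_apply, dotProduct,
    mulVec, Finset.mul_sum]
  rw [Finset.sum_comm]
  refine Finset.sum_congr rfl fun j _ => Finset.sum_congr rfl fun i _ => by ring

lemma vecMulVec_mul_vecMulVec {n : ℕ} (a b c d : Fin n → ℝ) :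
    vecMulVec a b * vecMulVec c d = (b ⬝ᵥ c) • vecMulVec a d := by
  ext i j
  simp only [mul_apply, vecMulVec_apply, Matrix.smul_apply, smul_eq_mul, dotProduct, Finset.sum_mul,
    Finset.mul_sum]
  refine Finset.sum_congr rfl fun t _ => by ring

lemma vecMulVec_transpose {n : ℕ} (a b : Fin n → ℝ) :
    (vecMulVec a b)ᵀ = vecMulVec b a := by
  ext i j; simp [vecMulVec_apply, transpose_apply, mul_comm]

noncomputable def House {n : ℕ} (u : Fin n → ℝ) : Matrix (Fin n) (Fin n) ℝ :=
  1 - (2 : ℝ) • vecMulVec u u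

lemma House_transpose {n : ℕ} (u : Fin n → ℝ) : (House u)ᵀ = House u := by
  simp [House, transpose_sub, transpose_smul, vecMulVec_transpose]

lemma House_mul_House {n : ℕ} (u : Fin n → ℝ) (hu : u ⬝ᵥ u = 1) :
    House u * House u = 1 := by
  have hV : vecMulVec u u * vecMulVec u u = (1:ℝ) • vecMulVec u u := by
    rw [vecMulVec_mul_vecMulVec, hu]
  simp only [House, sub_mul, mul_sub, one_mul, mul_one, smul_mul_assoc, mul_smul_comm, hV,
    smul_smul]
  module

lemma frobNormAux {a b : ℕ} (X : Matrix (Fin a) (Fin b) ℝ) :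
    (Real.sqrt (∑ i, ∑ j, (X i j) ^ 2)) ^ 2 = trace (Xᵀ * X) := by
  rw [Real.sq_sqrt (by positivity)]
  simp only [Matrix.trace, Matrix.diag_apply, mul_apply, transpose_apply]
  rw [Finset.sum_comm]
  refine Finset.sum_congr rfl fun i _ => Finset.sum_congr rfl fun j _ => by ring

lemma dot_mulVec_eq {a b : ℕ} (A : Matrix (Fin a) (Fin b) ℝ) (u : Fin a → ℝ) (v : Fin b → ℝ) :
    u ⬝ᵥ (A *ᵥ v) = (Aᵀ *ᵥ u) ⬝ᵥ v := by
  rw [Matrix.dotProduct_mulVec, Matrix.mulVec_transpose]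

lemma dot_nonneg {n : ℕ} (v : Fin n → ℝ) : 0 ≤ v ⬝ᵥ v := by
  simp only [dotProduct, ← pow_two]
  positivity

lemma dot_CS {n : ℕ} (u v : Fin n → ℝ) : (u ⬝ᵥ v) ^ 2 ≤ (u ⬝ᵥ u) * (v ⬝ᵥ v) := by
  simpa only [dotProduct, ← pow_two] using Finset.sum_mul_sq_le_sq_mul_sq Finset.univ u v

lemma quad_scale {n : ℕ} (M : Matrix (Fin n) (Fin n) ℝ) (c : ℝ)
    (h : ∀ v : Fin n → ℝ, v ⬝ᵥ v = 1 → c ≤ v ⬝ᵥ (M *ᵥ v)) :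
    ∀ v : Fin n → ℝ, c * (v ⬝ᵥ v) ≤ v ⬝ᵥ (M *ᵥ v) := by
  intro v
  rcases eq_or_lt_of_le (dot_nonneg v) with h0 | hpos
  · have hv : v = 0 := dotProduct_self_eq_zero.mp h0.symm
    simp [hv]
  · set t := v ⬝ᵥ v with ht
    have hst : Real.sqrt t > 0 := Real.sqrt_pos.mpr hpos
    have hw := h ((Real.sqrt t)⁻¹ • v) ?_
    · rw [Matrix.mulVec_smul, dotProduct_smul, smul_dotProduct] at hw
      have h2 : Real.sqrt t ^ 2 * c ≤ Real.sqrt t ^ 2 * ((Real.sqrt t)⁻¹ • ((Real.sqrt t)⁻¹ • (v ⬝ᵥ (M *ᵥ v)))) :=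
        mul_le_mul_of_nonneg_left hw (by positivity)
      rw [smul_eq_mul, smul_eq_mul] at h2
      rw [Real.sq_sqrt hpos.le] at h2
      calc c * t = t * c := by ring
        _ ≤ t * ((Real.sqrt t)⁻¹ * ((Real.sqrt t)⁻¹ * (v ⬝ᵥ M *ᵥ v))) := h2
        _ = (Real.sqrt t * Real.sqrt t) * ((Real.sqrt t)⁻¹ * ((Real.sqrt t)⁻¹ * (v ⬝ᵥ M *ᵥ v))) := by
            rw [Real.mul_self_sqrt hpos.le]
        _ = v ⬝ᵥ M *ᵥ v := by field_simp
    · rw [smul_dotProduct, dotProduct_smul, smul_eq_mul, smul_eq_mul, ← ht]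
      rw [← mul_assoc]
      rw [← Real.sqrt_inv]
      rw [show (Real.sqrt t⁻¹ * Real.sqrt t⁻¹) = t⁻¹ from Real.mul_self_sqrt (by positivity)]
      exact inv_mul_cancel₀ hpos.ne'
lemma fuse {p q r n : ℕ} {A : Matrix (Fin p) (Fin q) ℝ} {B : Matrix (Fin q) (Fin r) ℝ}
    {E : Matrix (Fin p) (Fin r) ℝ} (h : A * B = E) (X : Matrix (Fin r) (Fin n) ℝ) :
    A * (B * X) = E * X := by rw [← Matrix.mul_assoc, h]

lemma dot_gram {a b : ℕ} (A : Matrix (Fin a) (Fin b) ℝ) (v : Fin b → ℝ) :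
    (A *ᵥ v) ⬝ᵥ (A *ᵥ v) = v ⬝ᵥ ((Aᵀ * A) *ᵥ v) := by
  rw [← Matrix.mulVec_mulVec, dot_mulVec_eq Aᵀ v (A *ᵥ v), transpose_transpose]

lemma trace_House_mul {n : ℕ} (v : Fin n → ℝ) (N : Matrix (Fin n) (Fin n) ℝ) :
    trace (House v * N) = trace N - 2 * (v ⬝ᵥ (N *ᵥ v)) := by
  simp only [House, sub_mul, one_mul, smul_mul_assoc, trace_sub, trace_smul,
    trace_vecMulVec_mul, smul_eq_mul]

lemma trace_House_mul_House_mul {n : ℕ} (u v : Fin n → ℝ) (N : Matrix (Fin n) (Fin n) ℝ) :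
    trace (House u * (House v * N)) =
      trace N - 2 * (v ⬝ᵥ (N *ᵥ v)) - 2 * (u ⬝ᵥ (N *ᵥ u))
        + 4 * ((u ⬝ᵥ v) * (v ⬝ᵥ (N *ᵥ u))) := by
  have expand : House u * (House v * N) =
      N - (2:ℝ) • (vecMulVec v v * N) - (2:ℝ) • (vecMulVec u u * N)
        + (2*2:ℝ) • ((u ⬝ᵥ v) • (vecMulVec u v * N)) := by
    simp only [House, sub_mul, mul_sub, one_mul, smul_mul_assoc, mul_smul_comm, smul_sub,
      smul_smul]
    rw [fuse (vecMulVec_mul_vecMulVec u u v v), smul_mul_assoc]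
    module
  rw [expand]
  simp only [trace_add, trace_sub, trace_smul, trace_vecMulVec_mul, smul_eq_mul]
  ring

lemma real_aux {a b : ℝ} (h : ∀ c s : ℝ, c ^ 2 + s ^ 2 = 1 → 0 ≤ c → c * s * a ≤ s ^ 2 * b) :
    a = 0 := by
  by_contra ha
  have ha2 : 0 < a ^ 2 := by positivity
  set ε : ℝ := min ((2 * |a|)⁻¹) ((2 * (|b| + 1))⁻¹) with hε
  have haabs : 0 < |a| := abs_pos.mpr ha
  have hεpos : 0 < ε := lt_min (by positivity) (by positivity)
  have hεa : ε * |a| ≤ 1 / 2 := by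
    have h1 : ε * |a| ≤ (2 * |a|)⁻¹ * |a| :=
      mul_le_mul_of_nonneg_right (min_le_left _ _) haabs.le
    have h2 : (2 * |a|)⁻¹ * |a| = 1 / 2 := by field_simp
    linarith
  have hεb : ε * b < 1 / 2 := by
    have h1 : ε * |b| ≤ (2 * (|b| + 1))⁻¹ * |b| :=
      mul_le_mul_of_nonneg_right (min_le_right _ _) (abs_nonneg b)
    have h2 : (2 * (|b| + 1))⁻¹ * |b| < 1 / 2 := by
      rw [inv_mul_eq_div, div_lt_div_iff₀ (by positivity) (by norm_num)]
      nlinarith [abs_nonneg b]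
    have h3 : ε * b ≤ ε * |b| := mul_le_mul_of_nonneg_left (le_abs_self b) hεpos.le
    linarith
  set s : ℝ := ε * a with hs
  have hs2 : s ^ 2 ≤ 1 / 4 := by
    have : s ^ 2 = (ε * |a|) ^ 2 := by
      rw [hs, mul_pow, mul_pow, sq_abs]
    rw [this]
    nlinarith [mul_pos hεpos haabs]
  set c : ℝ := Real.sqrt (1 - s ^ 2) with hc
  have hc0 : 0 ≤ c := Real.sqrt_nonneg _
  have hc2 : c ^ 2 = 1 - s ^ 2 := Real.sq_sqrt (by nlinarith)
  have hchalf : 1 / 2 ≤ c := by nlinarith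
  have hkey := h c s (by rw [hc2]; ring) hc0
  -- c * (ε*a) * a ≤ (ε*a)^2 * b
  have hεa2 : 0 < ε * a ^ 2 := by positivity
  rw [hs] at hkey
  nlinarith [mul_lt_mul_of_pos_left hεb hεa2,
    mul_le_mul_of_nonneg_left hchalf hεa2.le]



end Procrustes

namespace Procrustes

lemma psd_of_trace_max {n : ℕ} {N : Matrix (Fin n) (Fin n) ℝ}
    (htr : ∀ O : Matrix (Fin n) (Fin n) ℝ, Oᵀ * O = 1 → trace (Oᵀ * N) ≤ trace N) :
    ∀ v : Fin n → ℝ, v ⬝ᵥ v = 1 → 0 ≤ v ⬝ᵥ (N *ᵥ v) := by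
  intro v hv
  have hO := htr (House v) (by rw [House_transpose]; exact House_mul_House v hv)
  rw [House_transpose, trace_House_mul] at hO
  linarith

lemma pair_ineq_of_trace_max {n : ℕ} {N : Matrix (Fin n) (Fin n) ℝ}
    (htr : ∀ O : Matrix (Fin n) (Fin n) ℝ, Oᵀ * O = 1 → trace (Oᵀ * N) ≤ trace N)
    (u v : Fin n → ℝ) (hu : u ⬝ᵥ u = 1) (hv : v ⬝ᵥ v = 1) :
    4 * ((u ⬝ᵥ v) * (v ⬝ᵥ (N *ᵥ u))) ≤ 2 * (u ⬝ᵥ (N *ᵥ u)) + 2 * (v ⬝ᵥ (N *ᵥ v)) := by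
  have horth : (House v * House u)ᵀ * (House v * House u) = 1 := by
    rw [transpose_mul, House_transpose, House_transpose, Matrix.mul_assoc,
      fuse (House_mul_House v hv) (House u), one_mul, House_mul_House u hu]
  have hO := htr (House v * House u) horth
  rw [transpose_mul, House_transpose, House_transpose, Matrix.mul_assoc,
    trace_House_mul_House_mul] at hO
  linarith

lemma mulVec_dot {a b : ℕ} (A : Matrix (Fin a) (Fin b) ℝ) (u : Fin b → ℝ) (w : Fin a → ℝ) :
    (A *ᵥ u) ⬝ᵥ w = u ⬝ᵥ (Aᵀ *ᵥ w) := by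
  rw [dotProduct_comm, dot_mulVec_eq, dotProduct_comm]

lemma specNorm_zero {a b : ℕ} : specNorm (0 : Matrix (Fin a) (Fin b) ℝ) = 0 := by
  have hT : T (0 : Matrix (Fin a) (Fin b) ℝ) = 0 := by
    unfold T; rw [map_zero, map_zero]
  rw [specNorm_eq, hT, norm_zero]

lemma symm_of_trace_max {n : ℕ} {N : Matrix (Fin n) (Fin n) ℝ}
    (htr : ∀ O : Matrix (Fin n) (Fin n) ℝ, Oᵀ * O = 1 → trace (Oᵀ * N) ≤ trace N) :
    Nᵀ = N := by
  ext i j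
  rw [transpose_apply]
  rcases eq_or_ne i j with rfl | hij
  · rfl
  · have key : N j i - N i j = 0 := by
      apply real_aux (b := N i i + N j j)
      intro c s hcs hc
      have hu : (Pi.single i (1:ℝ)) ⬝ᵥ (Pi.single i (1:ℝ)) = 1 := by
        simp [single_dotProduct]
      have hsij : (Pi.single i (1:ℝ)) ⬝ᵥ (Pi.single j (1:ℝ)) = 0 := by
        simp [single_dotProduct, Pi.single_apply, hij]
      set v : Fin n → ℝ := c • (Pi.single i (1:ℝ) : Fin n → ℝ) + s • (Pi.single j (1:ℝ) : Fin n → ℝ) with hvdef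
      have hv : v ⬝ᵥ v = 1 := by
        simp only [hvdef, dotProduct_add, add_dotProduct, dotProduct_smul, smul_dotProduct,
          smul_eq_mul, single_dotProduct, dotProduct_single, Pi.single_apply]
        simp [hij, Ne.symm hij]
        linear_combination hcs
      have h := pair_ineq_of_trace_max htr (Pi.single i (1:ℝ)) v hu hv
      simp only [hvdef, dotProduct_add, add_dotProduct, dotProduct_smul, smul_dotProduct,
        smul_eq_mul, Matrix.mulVec_add, Matrix.mulVec_smul, mulVec_single,
        single_dotProduct, dotProduct_single, Pi.single_apply, mul_one,
        op_smul_eq_mul, Matrix.col_apply] at h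
      simp only [hij, Ne.symm hij, if_neg, if_pos, ite_true, ite_false] at h
      have e1 : c ^ 2 * N i i + s ^ 2 * N i i = N i i := by
        linear_combination N i i * hcs
      nlinarith [h, e1]
    linarith

end Procrustes


set_option maxHeartbeats 1600000

open Procrustes in
/-- Let `U, Ũ ∈ ℝ^{d×k}` have orthonormal columns and let `O*` minimize
`‖U − Ũ O‖_F` over orthogonal `O`.  With `d(U,Ũ) = ‖U − Ũ O*‖₂` and
`dist(U,Ũ) = ‖U Uᵀ − Ũ Ũᵀ‖₂`, one has `d(U,Ũ) = √(2 − 2 √(1 − dist(U,Ũ)²))`. -/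
theorem procrustes_distance_formula {d k : ℕ}
    (U Ut : Matrix (Fin d) (Fin k) ℝ)
    (hU : Uᵀ * U = 1) (hUt : Utᵀ * Ut = 1)
    (Ostar : Matrix (Fin k) (Fin k) ℝ) (hOstar : Ostarᵀ * Ostar = 1)
    (hmin : ∀ O : Matrix (Fin k) (Fin k) ℝ, Oᵀ * O = 1 →
      frobNorm (U - Ut * Ostar) ≤ frobNorm (U - Ut * O)) :
    specNorm (U - Ut * Ostar) =
      Real.sqrt (2 - 2 * Real.sqrt (1 - (specNorm (U * Uᵀ - Ut * Utᵀ)) ^ 2)) := by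
  -- setup
  obtain ⟨C, hCdef⟩ : ∃ X : Matrix (Fin d) (Fin k) ℝ, X = Ut * Ostar := ⟨_, rfl⟩
  rw [← hCdef] at hmin ⊢
  obtain ⟨N, hNdef⟩ : ∃ X : Matrix (Fin k) (Fin k) ℝ, X = Cᵀ * U := ⟨_, rfl⟩
  have hOO : Ostar * Ostarᵀ = 1 := mul_eq_one_comm.mp hOstar
  have hC : Cᵀ * C = 1 := by
    rw [hCdef, transpose_mul, Matrix.mul_assoc, fuse hUt Ostar, one_mul, hOstar]
  have hQeq : Ut * Utᵀ = C * Cᵀ := by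
    rw [hCdef, transpose_mul, Matrix.mul_assoc, fuse hOO Utᵀ, Matrix.one_mul]
  -- Step A: trace optimality
  have hfrobsq : ∀ X : Matrix (Fin d) (Fin k) ℝ, frobNorm X ^ 2 = trace (Xᵀ * X) :=
    fun X => frobNormAux X
  have hexp : ∀ O : Matrix (Fin k) (Fin k) ℝ, Oᵀ * O = 1 →
      frobNorm (U - C * O) ^ 2 =
        trace (1 : Matrix (Fin k) (Fin k) ℝ) + trace (1 : Matrix (Fin k) (Fin k) ℝ)
          - 2 * trace (Oᵀ * N) := by
    intro O hO
    rw [hfrobsq]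
    have hmat : (U - C * O)ᵀ * (U - C * O) = 1 + 1 - (Oᵀ * N + (Oᵀ * N)ᵀ) := by
      rw [transpose_sub]
      rw [Matrix.sub_mul, Matrix.mul_sub, Matrix.mul_sub, hU, transpose_mul, transpose_mul,
        Matrix.mul_assoc Oᵀ Cᵀ U]
      rw [show Oᵀ * Cᵀ * (C * O) = 1 from by
        rw [Matrix.mul_assoc, fuse hC O, one_mul, hO]]
      rw [show Uᵀ * (C * O) = (Oᵀ * (Cᵀ * U))ᵀ from by
        rw [transpose_mul, transpose_mul, transpose_transpose, transpose_transpose,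
          Matrix.mul_assoc]]
      rw [← hNdef]
      simp only [transpose_mul, transpose_transpose]
      abel
    rw [hmat, trace_sub, trace_add, trace_add, trace_transpose]
    ring
  have htr : ∀ O : Matrix (Fin k) (Fin k) ℝ, Oᵀ * O = 1 → trace (Oᵀ * N) ≤ trace N := by
    intro O hO
    have h1 := hmin (Ostar * O) (by
      rw [transpose_mul, Matrix.mul_assoc, fuse hOstar O, one_mul, hO])
    rw [← Matrix.mul_assoc, ← hCdef] at h1
    have h1' : frobNorm (U - C * (1 : Matrix (Fin k) (Fin k) ℝ)) ≤ frobNorm (U - C * O) := by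
      rwa [Matrix.mul_one]
    have h2 : frobNorm (U - C * (1 : Matrix (Fin k) (Fin k) ℝ)) ^ 2 ≤ frobNorm (U - C * O) ^ 2 :=
      pow_le_pow_left₀ (Real.sqrt_nonneg _) h1' 2
    rw [hexp O hO, hexp (1 : Matrix (Fin k) (Fin k) ℝ) (by simp)] at h2
    rw [transpose_one, one_mul] at h2
    linarith
  -- symmetry and psd
  have hsymm : Nᵀ = N := symm_of_trace_max htr
  have hpsd1 : ∀ v : Fin k → ℝ, v ⬝ᵥ v = 1 → 0 ≤ v ⬝ᵥ (N *ᵥ v) := psd_of_trace_max htr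
  -- basic fused products
  have hCU : Cᵀ * U = N := hNdef.symm
  have hUC : Uᵀ * C = N := by
    rw [← hsymm, hNdef, transpose_mul, transpose_transpose]
  -- rewrite the goal's distance matrix
  rw [hQeq]
  rcases Nat.eq_zero_or_pos k with hk | hk
  · subst hk
    have h1 : U - C = 0 := by ext i j; exact Fin.elim0 j
    have h2 : U * Uᵀ - C * Cᵀ = 0 := by
      ext i j
      simp [Matrix.sub_apply, Matrix.mul_apply]
    rw [h1, h2, specNorm_zero, specNorm_zero]
    norm_num [Real.sqrt_one, Real.sqrt_zero]
  -- main case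
  obtain ⟨x₀, hx₀, hx₀s⟩ := spec_attained hk (U - C)
  obtain ⟨μ, hμdef⟩ : ∃ t : ℝ, t = x₀ ⬝ᵥ (N *ᵥ x₀) := ⟨_, rfl⟩
  -- Gram identity
  have hmatA : (U - C)ᵀ * (U - C) =
      (2:ℝ) • (1 : Matrix (Fin k) (Fin k) ℝ) - (2:ℝ) • N := by
    rw [transpose_sub, Matrix.sub_mul, Matrix.mul_sub, Matrix.mul_sub, hU, hC, hUC, hCU]
    module
  have hGram : ∀ v : Fin k → ℝ,
      ((U - C) *ᵥ v) ⬝ᵥ ((U - C) *ᵥ v) = 2 * (v ⬝ᵥ v) - 2 * (v ⬝ᵥ (N *ᵥ v)) := by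
    intro v
    rw [dot_gram, hmatA, Matrix.sub_mulVec, Matrix.smul_mulVec,
      Matrix.smul_mulVec, Matrix.one_mulVec, dotProduct_sub, dotProduct_smul,
      dotProduct_smul, smul_eq_mul, smul_eq_mul]
  have hs2 : specNorm (U - C) ^ 2 = 2 - 2 * μ := by
    rw [← hx₀s, hGram x₀, hx₀, ← hμdef]; norm_num
  have hmu_le : ∀ v : Fin k → ℝ, μ * (v ⬝ᵥ v) ≤ v ⬝ᵥ (N *ᵥ v) := by
    apply quad_scale
    intro v hv
    have h1 := dot_le_spec (U - C) v
    rw [hGram v, hv, mul_one] at h1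
    rw [hs2] at h1
    linarith
  have hmu0 : 0 ≤ μ := by rw [hμdef]; exact hpsd1 x₀ hx₀
  have hmu1 : μ ≤ 1 := by
    have ha : (C *ᵥ x₀) ⬝ᵥ (C *ᵥ x₀) = 1 := by
      rw [dot_gram, hC, Matrix.one_mulVec, hx₀]
    have hb : (U *ᵥ x₀) ⬝ᵥ (U *ᵥ x₀) = 1 := by
      rw [dot_gram, hU, Matrix.one_mulVec, hx₀]
    have hab : μ = (C *ᵥ x₀) ⬝ᵥ (U *ᵥ x₀) := by
      rw [hμdef, hNdef, ← Matrix.mulVec_mulVec, dot_mulVec_eq, transpose_transpose]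
    have hd := dot_nonneg (C *ᵥ x₀ - U *ᵥ x₀)
    have hcomm : (U *ᵥ x₀) ⬝ᵥ (C *ᵥ x₀) = (C *ᵥ x₀) ⬝ᵥ (U *ᵥ x₀) := dotProduct_comm _ _
    rw [sub_dotProduct, dotProduct_sub, dotProduct_sub, ha, hb, hcomm] at hd
    linarith
  -- eigenvector property
  obtain ⟨w, hwdef⟩ : ∃ w : Fin k → ℝ, w = N *ᵥ x₀ - μ • x₀ := ⟨_, rfl⟩
  have hNx₀ : N *ᵥ x₀ = μ • x₀ + w := by rw [hwdef]; abel
  have hRquad : ∀ v : Fin k → ℝ, 0 ≤ v ⬝ᵥ (N *ᵥ v) - μ * (v ⬝ᵥ v) := fun v => by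
    linarith [hmu_le v]
  have e2 : w ⬝ᵥ (N *ᵥ x₀) = μ * (w ⬝ᵥ x₀) + w ⬝ᵥ w := by
    rw [hNx₀, dotProduct_add, dotProduct_smul, smul_eq_mul]
  have e3 : x₀ ⬝ᵥ (N *ᵥ w) = μ * (w ⬝ᵥ x₀) + w ⬝ᵥ w := by
    rw [dot_mulVec_eq, hsymm, dotProduct_comm (N *ᵥ x₀) w, e2]
  have e4 : x₀ ⬝ᵥ w = w ⬝ᵥ x₀ := dotProduct_comm _ _
  have e1 : x₀ ⬝ᵥ (N *ᵥ x₀) = μ := hμdef.symm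
  have key : ∀ t : ℝ, 0 ≤ 2 * t * (w ⬝ᵥ w) + t ^ 2 * (w ⬝ᵥ (N *ᵥ w) - μ * (w ⬝ᵥ w)) := by
    intro t
    have h0 := hRquad (x₀ + t • w)
    simp only [Matrix.mulVec_add, Matrix.mulVec_smul, dotProduct_add, add_dotProduct,
      dotProduct_smul, smul_dotProduct, smul_eq_mul, e1, e2, e3, e4, hx₀] at h0
    nlinarith [h0]
  have hw0 : w = 0 := by
    have hα : 0 ≤ w ⬝ᵥ w := dot_nonneg w
    have hβ : 0 ≤ w ⬝ᵥ (N *ᵥ w) - μ * (w ⬝ᵥ w) := hRquad w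
    have hb1 : (0:ℝ) < (w ⬝ᵥ (N *ᵥ w) - μ * (w ⬝ᵥ w)) + 1 := by linarith
    have h' := key (-((w ⬝ᵥ w) / ((w ⬝ᵥ (N *ᵥ w) - μ * (w ⬝ᵥ w)) + 1)))
    have ha0 : w ⬝ᵥ w ≤ 0 := by
      set α := w ⬝ᵥ w
      set β := w ⬝ᵥ (N *ᵥ w) - μ * α
      have h'' := mul_le_mul_of_nonneg_left h' (le_of_lt (mul_pos hb1 hb1))
      rw [mul_zero] at h''
      have hexp' : (β + 1) * (β + 1) * (2 * -(α / (β + 1)) * α + (-(α / (β + 1))) ^ 2 * β)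
          = -2 * α ^ 2 * (β + 1) + α ^ 2 * β := by
        field_simp
      rw [hexp'] at h''
      nlinarith [h'', hβ, sq_nonneg α]
    exact dotProduct_self_eq_zero.mp (le_antisymm ha0 hα)
  have heig : N *ᵥ x₀ = μ • x₀ := by rw [hNx₀, hw0]; abel
  -- quadratic bound for N ^ 2
  have hN2 : ∀ y : Fin k → ℝ, μ ^ 2 * (y ⬝ᵥ y) ≤ (N *ᵥ y) ⬝ᵥ (N *ᵥ y) := by
    intro y
    rcases eq_or_lt_of_le (dot_nonneg y) with h0 | hpos
    · have hy : y = 0 := dotProduct_self_eq_zero.mp h0.symm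
      simp [hy]
    · have hcs := dot_CS y (N *ᵥ y)
      have h1 := hmu_le y
      have h2 : (μ * (y ⬝ᵥ y)) ^ 2 ≤ (y ⬝ᵥ (N *ᵥ y)) ^ 2 :=
        pow_le_pow_left₀ (mul_nonneg hmu0 (dot_nonneg y)) h1 2
      have h4 : (y ⬝ᵥ y) * (μ ^ 2 * (y ⬝ᵥ y)) ≤ (y ⬝ᵥ y) * ((N *ᵥ y) ⬝ᵥ (N *ᵥ y)) := by
        calc (y ⬝ᵥ y) * (μ ^ 2 * (y ⬝ᵥ y)) = (μ * (y ⬝ᵥ y)) ^ 2 := by ring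
          _ ≤ (y ⬝ᵥ (N *ᵥ y)) ^ 2 := h2
          _ ≤ (y ⬝ᵥ y) * ((N *ᵥ y) ⬝ᵥ (N *ᵥ y)) := hcs
      exact le_of_mul_le_mul_left h4 hpos
  have h1mu2 : (0:ℝ) ≤ 1 - μ ^ 2 := by nlinarith [hmu0, hmu1]
  -- transposes
  have hD : (U * Uᵀ - C * Cᵀ)ᵀ = U * Uᵀ - C * Cᵀ := by
    simp [transpose_sub, transpose_mul, transpose_transpose]
  have h1Pt : (1 - U * Uᵀ)ᵀ = 1 - U * Uᵀ := by
    simp [transpose_sub, transpose_mul, transpose_transpose, transpose_one]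
  -- matrix identities
  have I1 : Uᵀ * ((U * Uᵀ - C * Cᵀ)ᵀ * (U * Uᵀ - C * Cᵀ) * U) = 1 - N * N := by
    rw [hD]
    simp only [Matrix.sub_mul, Matrix.mul_sub, Matrix.mul_assoc]
    simp only [fuse hU, fuse hC, fuse hCU, fuse hUC, hU, hC, hCU, hUC,
      Matrix.one_mul, Matrix.mul_one]
    abel
  have I2 : (U * Uᵀ - C * Cᵀ)ᵀ * (U * Uᵀ - C * Cᵀ) =
      U * ((1 - N * N) * Uᵀ) + (1 - U * Uᵀ) * (C * Cᵀ * (1 - U * Uᵀ)) := by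
    rw [hD]
    simp only [Matrix.sub_mul, Matrix.mul_sub, Matrix.mul_assoc,
      Matrix.one_mul, Matrix.mul_one]
    simp only [fuse hU, fuse hC, fuse hCU, fuse hUC, hU, hC, hCU, hUC,
      Matrix.one_mul, Matrix.mul_one]
    abel
  have I3 : Cᵀ * ((1 - U * Uᵀ) * C) = 1 - N * N := by
    simp only [Matrix.sub_mul, Matrix.mul_sub, Matrix.mul_assoc,
      Matrix.one_mul, Matrix.mul_one]
    simp only [fuse hU, fuse hC, fuse hCU, fuse hUC, hU, hC, hCU, hUC,
      Matrix.one_mul, Matrix.mul_one]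
  have I5 : (1 - U * Uᵀ) * (1 - U * Uᵀ) = 1 - U * Uᵀ := by
    simp only [Matrix.sub_mul, Matrix.mul_sub, Matrix.mul_assoc,
      Matrix.one_mul, Matrix.mul_one]
    simp only [fuse hU, fuse hC, fuse hCU, fuse hUC, hU, hC, hCU, hUC,
      Matrix.one_mul, Matrix.mul_one]
    abel
  -- quadratic form of 1 - N*N
  have hquadNN : ∀ y : Fin k → ℝ, y ⬝ᵥ ((1 - N * N) *ᵥ y) ≤ (1 - μ ^ 2) * (y ⬝ᵥ y) := by
    intro y
    rw [Matrix.sub_mulVec, Matrix.one_mulVec, dotProduct_sub, ← Matrix.mulVec_mulVec,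
      dot_mulVec_eq N y (N *ᵥ y), hsymm]
    have := hN2 y
    nlinarith [hN2 y]
  -- lower bound
  have hD1 : 1 - μ ^ 2 ≤ specNorm (U * Uᵀ - C * Cᵀ) ^ 2 := by
    have hz : (U *ᵥ x₀) ⬝ᵥ (U *ᵥ x₀) = 1 := by
      rw [dot_gram, hU, Matrix.one_mulVec, hx₀]
    have hval : ((U * Uᵀ - C * Cᵀ) *ᵥ (U *ᵥ x₀)) ⬝ᵥ ((U * Uᵀ - C * Cᵀ) *ᵥ (U *ᵥ x₀))
        = 1 - μ ^ 2 := by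
      rw [dot_gram, Matrix.mulVec_mulVec, mulVec_dot, Matrix.mulVec_mulVec, ← Matrix.mul_assoc,
        Matrix.mul_assoc Uᵀ _ U]
      rw [I1, Matrix.sub_mulVec, Matrix.one_mulVec, dotProduct_sub, hx₀,
        ← Matrix.mulVec_mulVec, heig, Matrix.mulVec_smul, heig, dotProduct_smul,
        dotProduct_smul, smul_eq_mul, smul_eq_mul, hx₀]
      ring
    have h := dot_le_spec (U * Uᵀ - C * Cᵀ) (U *ᵥ x₀)
    rw [hval, hz, mul_one] at h
    exact h
  -- upper bound
  have hB : ∀ u : Fin k → ℝ,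
      ((1 - U * Uᵀ) *ᵥ (C *ᵥ u)) ⬝ᵥ ((1 - U * Uᵀ) *ᵥ (C *ᵥ u)) ≤ (1 - μ ^ 2) * (u ⬝ᵥ u) := by
    intro u
    rw [dot_gram, h1Pt, I5, Matrix.mulVec_mulVec, mulVec_dot, Matrix.mulVec_mulVec,
      ← Matrix.mul_assoc, Matrix.mul_assoc Cᵀ _ C, I3]
    exact hquadNN u
  have hDbound : ∀ v : Fin d → ℝ,
      ((U * Uᵀ - C * Cᵀ) *ᵥ v) ⬝ᵥ ((U * Uᵀ - C * Cᵀ) *ᵥ v)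
        ≤ (1 - μ ^ 2) * (v ⬝ᵥ v) := by
    intro v
    rw [dot_gram, I2, Matrix.add_mulVec, dotProduct_add]
    -- term 1
    have t1 : v ⬝ᵥ ((U * ((1 - N * N) * Uᵀ)) *ᵥ v)
        = (Uᵀ *ᵥ v) ⬝ᵥ ((1 - N * N) *ᵥ (Uᵀ *ᵥ v)) := by
      rw [← Matrix.mulVec_mulVec, dot_mulVec_eq U v, ← Matrix.mulVec_mulVec]
    have t1b : (Uᵀ *ᵥ v) ⬝ᵥ ((1 - N * N) *ᵥ (Uᵀ *ᵥ v))
        ≤ (1 - μ ^ 2) * ((Uᵀ *ᵥ v) ⬝ᵥ (Uᵀ *ᵥ v)) := hquadNN _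
    -- term 2
    have t2 : v ⬝ᵥ (((1 - U * Uᵀ) * (C * Cᵀ * (1 - U * Uᵀ))) *ᵥ v)
        = (Cᵀ *ᵥ ((1 - U * Uᵀ) *ᵥ v)) ⬝ᵥ (Cᵀ *ᵥ ((1 - U * Uᵀ) *ᵥ v)) := by
      rw [← Matrix.mulVec_mulVec, dot_mulVec_eq (1 - U * Uᵀ) v, h1Pt,
        ← Matrix.mulVec_mulVec, ← Matrix.mulVec_mulVec, dot_mulVec_eq C]
    have t2b : (Cᵀ *ᵥ ((1 - U * Uᵀ) *ᵥ v)) ⬝ᵥ (Cᵀ *ᵥ ((1 - U * Uᵀ) *ᵥ v))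
        ≤ (1 - μ ^ 2) * (((1 - U * Uᵀ) *ᵥ v) ⬝ᵥ ((1 - U * Uᵀ) *ᵥ v)) := by
      set z' : Fin d → ℝ := (1 - U * Uᵀ) *ᵥ v with hz'
      set b : Fin k → ℝ := Cᵀ *ᵥ z' with hbdef
      have hzz' : (1 - U * Uᵀ) *ᵥ z' = z' := by
        rw [hz', Matrix.mulVec_mulVec, I5]
      have hr := hB b
      have hbb : b ⬝ᵥ b = z' ⬝ᵥ ((1 - U * Uᵀ) *ᵥ (C *ᵥ b)) := by
        conv_lhs => rw [hbdef]
        rw [← dot_mulVec_eq C z' b]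
        conv_rhs => rw [dot_mulVec_eq (1 - U * Uᵀ) z' (C *ᵥ b), h1Pt, hzz']
      have hcs := dot_CS z' ((1 - U * Uᵀ) *ᵥ (C *ᵥ b))
      rcases eq_or_lt_of_le (dot_nonneg b) with hb0 | hbpos
      · rw [← hb0]
        exact mul_nonneg h1mu2 (dot_nonneg z')
      · nlinarith [hcs, hr, hbb, dot_nonneg z', hbpos]
    -- combine
    have hy : (Uᵀ *ᵥ v) ⬝ᵥ (Uᵀ *ᵥ v) = v ⬝ᵥ ((U * Uᵀ) *ᵥ v) := by
      rw [dot_gram, transpose_transpose]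
    have hz'z' : ((1 - U * Uᵀ) *ᵥ v) ⬝ᵥ ((1 - U * Uᵀ) *ᵥ v)
        = v ⬝ᵥ v - v ⬝ᵥ ((U * Uᵀ) *ᵥ v) := by
      rw [dot_gram, h1Pt, I5, Matrix.sub_mulVec, Matrix.one_mulVec, dotProduct_sub]
    rw [t1, t2]
    rw [hz'z'] at t2b
    rw [hy] at t1b
    linarith
  have hD2 : specNorm (U * Uᵀ - C * Cᵀ) ^ 2 ≤ 1 - μ ^ 2 := by
    have hle : specNorm (U * Uᵀ - C * Cᵀ) ≤ Real.sqrt (1 - μ ^ 2) := by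
      apply spec_le _ (Real.sqrt_nonneg _)
      intro v
      rw [Real.sq_sqrt h1mu2]
      exact hDbound v
    have := pow_le_pow_left₀ (specNorm_nonneg _) hle 2
    rwa [Real.sq_sqrt h1mu2] at this
  have hst2 : specNorm (U * Uᵀ - C * Cᵀ) ^ 2 = 1 - μ ^ 2 := le_antisymm hD2 hD1
  -- conclusion
  rw [hst2, show (1:ℝ) - (1 - μ ^ 2) = μ ^ 2 from by ring, Real.sqrt_sq hmu0,
    show (2:ℝ) - 2 * μ = specNorm (U - C) ^ 2 from hs2.symm,
    Real.sqrt_sq (specNorm_nonneg _)]
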